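/- There exists a finite point set S in the Euclidean plane such that the relative neighborhood graph on S is not a monotonic search network: there exist p, q ∈ S with no monotonic path from p to q in the RNG. -/

import Mathlib

/-- The lune of `p` and `q`: intersection of the two open balls of radius `δ(p,q)`. -/
def lune (p q : EuclideanSpace ℝ (Fin 2)) : Set (EuclideanSpace ℝ (Fin 2)) :=
  Metric.ball p (dist p q) ∩ Metric.ball q (dist p q)

def pt (a b : ℝ) : EuclideanSpace ℝ (Fin 2) := !₂[a, b]

lemma dist_eval (a b c d : ℝ) :
    dist (pt a b) (pt c d) =
      Real.sqrt ((a - c) ^ 2 + (b - d) ^ 2) := by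
  rw [EuclideanSpace.dist_eq, Fin.sum_univ_two]
  simp [pt, Real.dist_eq, sq_abs]

/-- There is a finite point set `S` in the plane whose RNG is not a
monotonic search network: some pair `p, q ∈ S` admits no monotonic path from `p` to
`q` in the RNG. -/
theorem rng_not_msnet :
    ∃ (S : Finset (EuclideanSpace ℝ (Fin 2))) (p q : EuclideanSpace ℝ (Fin 2)),
      p ∈ S ∧ q ∈ S ∧ p ≠ q ∧
      ¬ ∃ (k : ℕ) (v : ℕ → EuclideanSpace ℝ (Fin 2)),
          v 0 = p ∧ v k = q ∧ (∀ i ≤ k, v i ∈ S) ∧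
          (∀ i < k, v i ≠ v (i + 1) ∧ ∀ r ∈ S, r ∉ lune (v i) (v (i + 1))) ∧
          (∀ i < k, dist (v (i + 1)) q < dist (v i) q) := by
  classical
  set P : EuclideanSpace ℝ (Fin 2) := pt (0:ℝ) (0) with hP
  set Q : EuclideanSpace ℝ (Fin 2) := pt (10:ℝ) (0) with hQ
  set A : EuclideanSpace ℝ (Fin 2) := pt (5:ℝ) (6) with hA
  set B : EuclideanSpace ℝ (Fin 2) := pt (-1:ℝ) (5) with hB
  have hPQ : dist P Q = 10 := by
    rw [hP, hQ, dist_eval]; rw [show ((0:ℝ)-10)^2 + (0-0)^2 = 100 by norm_num]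
    rw [show (100:ℝ) = 10 ^ 2 by norm_num, Real.sqrt_sq (by norm_num)]
  have hPA : dist P A = Real.sqrt 61 := by
    rw [hP, hA, dist_eval]; norm_num
  have hAP : dist A P = Real.sqrt 61 := by rw [dist_comm]; exact hPA
  have hAQ : dist A Q = Real.sqrt 61 := by
    rw [hA, hQ, dist_eval]; norm_num
  have hBQ : dist B Q = Real.sqrt 146 := by
    rw [hB, hQ, dist_eval]; norm_num
  have hBP : dist B P = Real.sqrt 26 := by
    rw [hB, hP, dist_eval]; norm_num
  have hBA : dist B A = Real.sqrt 37 := by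
    rw [hB, hA, dist_eval]; norm_num
  have hs61 : Real.sqrt 61 < 10 := by
    rw [show (10:ℝ) = Real.sqrt 100 by
      rw [show (100:ℝ) = 10 ^ 2 by norm_num, Real.sqrt_sq (by norm_num)]]
    exact Real.sqrt_lt_sqrt (by norm_num) (by norm_num)
  have hs146 : (10:ℝ) ≤ Real.sqrt 146 := by
    rw [show (10:ℝ) = Real.sqrt 100 by
      rw [show (100:ℝ) = 10 ^ 2 by norm_num, Real.sqrt_sq (by norm_num)]]
    exact Real.sqrt_le_sqrt (by norm_num)
  have hs26 : Real.sqrt 26 < Real.sqrt 61 := Real.sqrt_lt_sqrt (by norm_num) (by norm_num)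
  have hs37 : Real.sqrt 37 < Real.sqrt 61 := Real.sqrt_lt_sqrt (by norm_num) (by norm_num)
  have hPneQ : P ≠ Q := by
    intro h
    have := congrArg (fun x => dist x Q) h
    simp only [dist_self] at this
    rw [hPQ] at this; norm_num at this
  refine ⟨{P, Q, A, B}, P, Q, by simp, by simp, hPneQ, ?_⟩
  rintro ⟨k, v, h0, hk, hmem, hedge, hmono⟩
  have hkpos : 0 < k := by
    rcases Nat.eq_zero_or_pos k with h | h
    · exact absurd (h0 ▸ h ▸ hk) hPneQ
    · exact h
  have hv1S : v 1 ∈ ({P, Q, A, B} : Finset (EuclideanSpace ℝ (Fin 2))) := hmem 1 hkpos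
  have hv1ne : v 1 ≠ P := by
    intro h; exact (hedge 0 hkpos).1 (by rw [h0, h])
  have hv1dist : dist (v 1) Q < 10 := by
    have := hmono 0 hkpos
    rwa [h0, hPQ] at this
  have hAmem : A ∈ ({P, Q, A, B} : Finset (EuclideanSpace ℝ (Fin 2))) := by simp
  have hBmem : B ∈ ({P, Q, A, B} : Finset (EuclideanSpace ℝ (Fin 2))) := by simp
  simp only [Finset.mem_insert, Finset.mem_singleton] at hv1S
  rcases hv1S with h | h | h | h
  · exact hv1ne h
  · -- v 1 = Q, but A is in lune P Q
    have := (hedge 0 hkpos).2 A hAmem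
    rw [h0, h] at this
    exact this ⟨by rw [Metric.mem_ball, dist_comm, hPA, hPQ]; exact hs61,
      by rw [Metric.mem_ball, hAQ, hPQ]; exact hs61⟩
  · -- v 1 = A, but B is in lune P A
    have := (hedge 0 hkpos).2 B hBmem
    rw [h0, h] at this
    exact this ⟨by rw [Metric.mem_ball, hBP, hPA]; exact hs26,
      by rw [Metric.mem_ball, hBA, hPA]; exact hs37⟩
  · -- v 1 = B, but dist B Q ≥ 10
    rw [h, hBQ] at hv1dist
    exact absurd hv1dist (not_lt.mpr hs146)
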